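/- Prediction-loss bound (deterministic core of Theorem 1, inequality (17)): assume y = Xβ* + ε with (2/n)·max_{k,j} |X_{kj}^T ε| ≤ λα, let s = |G(β*)|, and assume the REgroup(κ, s) hypothesis holds. Then every minimizer β̂ of Q satisfies (1/n)‖X(β̂ − β*)‖₂² ≤ 16 s (λα)² / κ². -/

import Mathlib

lemma lse_lip (m : ℕ) (hm : 0 < m) (a b : Fin m → ℝ) (c : ℝ) (h : ∀ j, a j ≤ b j + c) :
    Real.log (∑ j, Real.exp (a j)) ≤ Real.log (∑ j, Real.exp (b j)) + c := by
  have hb : 0 < ∑ j, Real.exp (b j) :=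
    Finset.sum_pos (fun j _ => Real.exp_pos _) ⟨⟨0, hm⟩, Finset.mem_univ _⟩
  have ha : 0 < ∑ j, Real.exp (a j) :=
    Finset.sum_pos (fun j _ => Real.exp_pos _) ⟨⟨0, hm⟩, Finset.mem_univ _⟩
  have h1 : (∑ j, Real.exp (a j)) ≤ Real.exp c * ∑ j, Real.exp (b j) := by
    rw [Finset.mul_sum]
    refine Finset.sum_le_sum fun j _ => ?_
    rw [← Real.exp_add]
    exact Real.exp_le_exp.2 (by linarith [h j])
  calc Real.log (∑ j, Real.exp (a j)) ≤ Real.log (Real.exp c * ∑ j, Real.exp (b j)) :=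
        Real.log_le_log ha h1
    _ = Real.log (∑ j, Real.exp (b j)) + c := by
        rw [Real.log_mul (Real.exp_ne_zero _) (ne_of_gt hb), Real.log_exp]; ring

lemma jensen_exp (m : ℕ) (hm : 0 < m) (x : Fin m → ℝ) :
    Real.log m + (∑ j, x j) / m ≤ Real.log (∑ j, Real.exp (x j)) := by
  have hm' : (0:ℝ) < m := Nat.cast_pos.2 hm
  have hw : ∑ _j : Fin m, (m:ℝ)⁻¹ = 1 := by
    simp [Finset.sum_const, Finset.card_univ]
    field_simp
  have h := convexOn_exp.map_sum_le (t := Finset.univ) (w := fun _ : Fin m => (m:ℝ)⁻¹)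
      (p := x) (fun i _ => by positivity) hw (fun i _ => Set.mem_univ _)
  simp only [smul_eq_mul] at h
  have h2 : Real.exp ((∑ j, x j) / m) ≤ (∑ j, Real.exp (x j)) / m := by
    have e1 : (∑ j, (m:ℝ)⁻¹ * Real.exp (x j)) = (∑ j, Real.exp (x j)) / m := by
      rw [← Finset.mul_sum]; ring
    have e2 : ((∑ j, x j) / m) = ∑ j, (m:ℝ)⁻¹ * x j := by
      rw [← Finset.mul_sum]; ring
    rw [e2, ← e1]; exact h
  have h3 : (m:ℝ) * Real.exp ((∑ j, x j) / m) ≤ ∑ j, Real.exp (x j) := by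
    have := (le_div_iff₀ hm').mp h2; linarith
  calc Real.log m + (∑ j, x j) / m
      = Real.log ((m:ℝ) * Real.exp ((∑ j, x j) / m)) := by
        rw [Real.log_mul (ne_of_gt hm') (Real.exp_ne_zero _), Real.log_exp]
    _ ≤ Real.log (∑ j, Real.exp (x j)) := Real.log_le_log (by positivity) h3

set_option maxHeartbeats 1000000 in
/-- **Prediction-loss bound** (deterministic core of Theorem 1, inequality (17)).
Assume `y = X β* + ε` with `(2/n) max_{k,j} |X kjᵀ ε| ≤ λ α`, let
`s = |G(β*)|`, and assume the REgroup(κ, s) hypothesis.  Then every minimizer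
`β̂` of `Q` (with weights `w k = p k`) satisfies
`(1/n) ‖X (β̂ - β*)‖₂² ≤ 16 s (λ α)² / κ²`. -/
theorem les_prediction_bound (n K : ℕ) (hn : 0 < n) (hK : 0 < K)
    (p : Fin K → ℕ) (hp : ∀ k, 1 ≤ p k)
    (X : Fin n → (Σ k : Fin K, Fin (p k)) → ℝ)
    (βstar : (Σ k : Fin K, Fin (p k)) → ℝ) (ε y : Fin n → ℝ)
    (hmodel : ∀ i, y i = (∑ j : Σ k : Fin K, Fin (p k), X i j * βstar j) + ε i)
    (lam α : ℝ) (hlam : 0 < lam) (hα : 0 < α)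
    (hnoise : ∀ j : Σ k : Fin K, Fin (p k),
      (2 / (n : ℝ)) * |∑ i : Fin n, X i j * ε i| ≤ lam * α)
    (G : Finset (Fin K)) (hG : ∀ k, k ∈ G ↔ ∃ j : Fin (p k), βstar ⟨k, j⟩ ≠ 0)
    (s : ℕ) (hs : s = G.card)
    (κ : ℝ) (hκ : 0 < κ)
    (hRE : ∀ G' : Finset (Fin K), G'.card ≤ s →
      ∀ Δ : (Σ k : Fin K, Fin (p k)) → ℝ, Δ ≠ 0 →
      (∑ k ∈ G'ᶜ, ∑ j : Fin (p k), |Δ ⟨k, j⟩|) ≤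
        (∑ k ∈ G', (1 + 2 * (p k : ℝ)) * ∑ j : Fin (p k), |Δ ⟨k, j⟩|) →
      κ * Real.sqrt (n : ℝ) *
          Real.sqrt (∑ k ∈ G', (p k : ℝ) * (1 + (p k : ℝ)) ^ 2 * ∑ j : Fin (p k), (Δ ⟨k, j⟩) ^ 2) ≤
        2 * Real.sqrt (∑ i : Fin n, (∑ j : Σ k : Fin K, Fin (p k), X i j * Δ j) ^ 2))
    (βh : (Σ k : Fin K, Fin (p k)) → ℝ)
    (hmin : IsMinOn
      (fun β : (Σ k : Fin K, Fin (p k)) → ℝ =>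
        (1 / (2 * (n : ℝ))) * ∑ i : Fin n, (y i - ∑ j : Σ k : Fin K, Fin (p k), X i j * β j) ^ 2
          + lam * ∑ k : Fin K, (p k : ℝ) * Real.log (∑ j : Fin (p k), Real.exp (α * |β ⟨k, j⟩|)))
      Set.univ βh) :
    (1 / (n : ℝ)) * ∑ i : Fin n, (∑ j : Σ k : Fin K, Fin (p k), X i j * (βh j - βstar j)) ^ 2 ≤
      16 * (s : ℝ) * (lam * α) ^ 2 / κ ^ 2 := by
  classical
  have hn' : (0:ℝ) < n := Nat.cast_pos.2 hn
  set Δ : (Σ k : Fin K, Fin (p k)) → ℝ := fun j => βh j - βstar j with hΔdef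
  set v : Fin n → ℝ := fun i => ∑ j : Σ k : Fin K, Fin (p k), X i j * Δ j with hvdef
  set T : ℝ := ∑ i : Fin n, (v i) ^ 2 with hTdef
  have hΔe : ∀ j, Δ j = βh j - βstar j := fun _ => rfl
  have hve : ∀ i, v i = ∑ j : Σ k : Fin K, Fin (p k), X i j * Δ j := fun _ => rfl
  have hT0 : 0 ≤ T := Finset.sum_nonneg fun i _ => sq_nonneg _
  clear_value v T
  by_cases hΔ0 : Δ = 0
  · have hT : T = 0 := by
      rw [hTdef]
      refine Finset.sum_eq_zero fun i _ => ?_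
      rw [hve i]
      rw [Finset.sum_eq_zero fun j _ => by rw [hΔ0]; simp]
      norm_num
    rw [hT, mul_zero]
    positivity
  -- notation
  set L1 : Fin K → ℝ := fun k => ∑ j : Fin (p k), |Δ ⟨k, j⟩| with hL1def
  set S : Fin K → ℝ := fun k => ∑ j : Fin (p k), (Δ ⟨k, j⟩) ^ 2 with hSdef
  set E : ℝ := ∑ i : Fin n, ε i * v i with hEdef
  set Lstar : Fin K → ℝ := fun k =>
    Real.log (∑ j : Fin (p k), Real.exp (α * |βstar ⟨k, j⟩|)) with hLstardef
  set Lhat : Fin K → ℝ := fun k =>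
    Real.log (∑ j : Fin (p k), Real.exp (α * |βh ⟨k, j⟩|)) with hLhatdef
  have hL1e : ∀ k, L1 k = ∑ j : Fin (p k), |Δ ⟨k, j⟩| := fun _ => rfl
  have hSe : ∀ k, S k = ∑ j : Fin (p k), (Δ ⟨k, j⟩) ^ 2 := fun _ => rfl
  have hLstare : ∀ k, Lstar k = Real.log (∑ j : Fin (p k), Real.exp (α * |βstar ⟨k, j⟩|)) :=
    fun _ => rfl
  have hLhate : ∀ k, Lhat k = Real.log (∑ j : Fin (p k), Real.exp (α * |βh ⟨k, j⟩|)) :=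
    fun _ => rfl
  clear_value L1 S E Lstar Lhat
  have hL10 : ∀ k, 0 ≤ L1 k := fun k => by
    rw [hL1e k]; exact Finset.sum_nonneg fun j _ => abs_nonneg _
  have hS0 : ∀ k, 0 ≤ S k := fun k => by
    rw [hSe k]; exact Finset.sum_nonneg fun j _ => sq_nonneg _
  -- Step A: basic inequality from minimality
  have hQ := isMinOn_iff.mp hmin βstar (Set.mem_univ _)
  have hv2 : ∀ i, y i - ∑ j : Σ k : Fin K, Fin (p k), X i j * βh j = ε i - v i := by
    intro i
    have hvi : v i = (∑ j : Σ k : Fin K, Fin (p k), X i j * βh j)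
        - (∑ j : Σ k : Fin K, Fin (p k), X i j * βstar j) := by
      rw [hve i, ← Finset.sum_sub_distrib]
      exact Finset.sum_congr rfl fun j _ => by rw [hΔe j]; ring
    rw [hmodel i]; linarith
  have hsum1 : ∑ i : Fin n, (y i - ∑ j : Σ k : Fin K, Fin (p k), X i j * βh j) ^ 2
      = (∑ i : Fin n, (ε i) ^ 2) - 2 * E + T := by
    have e : ∀ i : Fin n, (y i - ∑ j : Σ k : Fin K, Fin (p k), X i j * βh j) ^ 2
        = (ε i) ^ 2 - 2 * (ε i * v i) + (v i) ^ 2 := fun i => by rw [hv2 i]; ring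
    rw [Finset.sum_congr rfl fun i _ => e i, Finset.sum_add_distrib, Finset.sum_sub_distrib,
      ← Finset.mul_sum, hEdef, hTdef]
  have hsum2 : ∑ i : Fin n, (y i - ∑ j : Σ k : Fin K, Fin (p k), X i j * βstar j) ^ 2
      = ∑ i : Fin n, (ε i) ^ 2 := by
    refine Finset.sum_congr rfl fun i _ => ?_
    rw [hmodel i]; ring
  rw [hsum1, hsum2] at hQ
  set Pstar : ℝ := ∑ k : Fin K, (p k : ℝ) * Lstar k with hPstardef
  set Phat : ℝ := ∑ k : Fin K, (p k : ℝ) * Lhat k with hPhatdef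
  clear_value Pstar Phat
  have ePs : (∑ k : Fin K, (p k : ℝ) * Real.log (∑ j : Fin (p k), Real.exp (α * |βstar ⟨k, j⟩|)))
      = Pstar := by
    rw [hPstardef]
    exact Finset.sum_congr rfl fun k _ => by rw [hLstare k]
  have ePh : (∑ k : Fin K, (p k : ℝ) * Real.log (∑ j : Fin (p k), Real.exp (α * |βh ⟨k, j⟩|)))
      = Phat := by
    rw [hPhatdef]
    exact Finset.sum_congr rfl fun k _ => by rw [hLhate k]
  rw [ePs, ePh] at hQ
  have hQ' : (1 / (2 * (n:ℝ))) * ((∑ i : Fin n, (ε i)^2) - 2*E + T) + lam * Phat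
      ≤ (1 / (2 * (n:ℝ))) * (∑ i : Fin n, (ε i)^2) + lam * Pstar := hQ
  have key : T - 2 * E ≤ 2 * (n:ℝ) * lam * (Pstar - Phat) := by
    have h1 : (1 / (2 * (n:ℝ))) * (T - 2*E) ≤ lam * (Pstar - Phat) := by
      have e : (1 / (2 * (n:ℝ))) * ((∑ i : Fin n, (ε i)^2) - 2*E + T)
          = (1 / (2 * (n:ℝ))) * (∑ i : Fin n, (ε i)^2) + (1 / (2 * (n:ℝ))) * (T - 2*E) := by
        ring
      rw [e] at hQ'
      linarith
    have h2 := mul_le_mul_of_nonneg_left h1 (le_of_lt (by positivity : (0:ℝ) < 2 * n))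
    calc T - 2*E = (2*(n:ℝ)) * ((1 / (2 * (n:ℝ))) * (T - 2*E)) := by
          field_simp
      _ ≤ (2*(n:ℝ)) * (lam * (Pstar - Phat)) := h2
      _ = 2 * (n:ℝ) * lam * (Pstar - Phat) := by ring
  -- Step B: noise term
  have hswap : E = ∑ j : Σ k : Fin K, Fin (p k), (∑ i : Fin n, X i j * ε i) * Δ j := by
    rw [hEdef]
    calc ∑ i : Fin n, ε i * v i
        = ∑ i : Fin n, ∑ j : Σ k : Fin K, Fin (p k), ε i * (X i j * Δ j) := by
          refine Finset.sum_congr rfl fun i _ => ?_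
          rw [hve i]; exact Finset.mul_sum _ _ _
      _ = ∑ j : Σ k : Fin K, Fin (p k), ∑ i : Fin n, ε i * (X i j * Δ j) := Finset.sum_comm
      _ = ∑ j : Σ k : Fin K, Fin (p k), (∑ i : Fin n, X i j * ε i) * Δ j := by
          refine Finset.sum_congr rfl fun j _ => ?_
          rw [Finset.sum_mul]
          exact Finset.sum_congr rfl fun i _ => by ring
  have hnoise' : ∀ j : Σ k : Fin K, Fin (p k),
      2 * |∑ i : Fin n, X i j * ε i| ≤ (n:ℝ) * (lam * α) := by
    intro j
    have h := mul_le_mul_of_nonneg_left (hnoise j) (le_of_lt hn')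
    calc 2 * |∑ i : Fin n, X i j * ε i|
        = (n:ℝ) * ((2 / (n:ℝ)) * |∑ i : Fin n, X i j * ε i|) := by
          field_simp
      _ ≤ (n:ℝ) * (lam * α) := h
  have hE : 2 * E ≤ (n:ℝ) * (lam * α) * ∑ j : Σ k : Fin K, Fin (p k), |Δ j| := by
    rw [hswap, Finset.mul_sum, Finset.mul_sum]
    refine Finset.sum_le_sum fun j _ => ?_
    have h1 : 2 * ((∑ i : Fin n, X i j * ε i) * Δ j)
        ≤ 2 * (|∑ i : Fin n, X i j * ε i| * |Δ j|) := by
      have := le_abs_self ((∑ i : Fin n, X i j * ε i) * Δ j)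
      rw [abs_mul] at this; linarith
    have h2 := mul_le_mul_of_nonneg_right (hnoise' j) (abs_nonneg (Δ j))
    linarith
  -- Step C: penalty bounds
  have hC1 : ∀ k : Fin K, Lstar k - Lhat k ≤ α * L1 k := by
    intro k
    have h := lse_lip (p k) (hp k) (fun j => α * |βstar ⟨k, j⟩|) (fun j => α * |βh ⟨k, j⟩|)
      (α * L1 k) ?_
    · rw [hLstare k, hLhate k]
      linarith [h]
    · intro j
      have habs : |βstar ⟨k, j⟩| ≤ |βh ⟨k, j⟩| + |Δ ⟨k, j⟩| := by
        have e : βstar ⟨k, j⟩ = βh ⟨k, j⟩ - Δ ⟨k, j⟩ := by rw [hΔe ⟨k, j⟩]; ring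
        rw [e]; exact abs_sub _ _
      have hsing : |Δ ⟨k, j⟩| ≤ L1 k := by
        rw [hL1e k]
        exact Finset.single_le_sum (f := fun j' : Fin (p k) => |Δ ⟨k, j'⟩|)
          (fun j' _ => abs_nonneg _) (Finset.mem_univ j)
      have h2 : |βstar ⟨k, j⟩| ≤ |βh ⟨k, j⟩| + L1 k := by linarith
      have h3 := mul_le_mul_of_nonneg_left h2 (le_of_lt hα)
      show α * |βstar ⟨k, j⟩| ≤ α * |βh ⟨k, j⟩| + α * L1 k
      nlinarith [h3]
  have hC2 : ∀ k ∈ Gᶜ, (p k : ℝ) * (Lstar k - Lhat k) ≤ -(α * L1 k) := by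
    intro k hk
    have hkG : k ∉ G := Finset.mem_compl.mp hk
    have hβ0 : ∀ j : Fin (p k), βstar ⟨k, j⟩ = 0 := by
      intro j
      by_contra hne
      exact hkG ((hG k).mpr ⟨j, hne⟩)
    have hp' : (0:ℝ) < (p k : ℝ) := Nat.cast_pos.2 (hp k)
    have hLs : Lstar k = Real.log (p k) := by
      rw [hLstare k]
      simp [hβ0]
    have hsumb : (∑ j : Fin (p k), α * |βh ⟨k, j⟩|) = α * L1 k := by
      rw [hL1e k, Finset.mul_sum]
      refine Finset.sum_congr rfl fun j _ => ?_
      have e : Δ ⟨k, j⟩ = βh ⟨k, j⟩ := by rw [hΔe ⟨k, j⟩, hβ0 j]; ring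
      rw [e]
    have hj := jensen_exp (p k) (hp k) (fun j => α * |βh ⟨k, j⟩|)
    rw [hsumb] at hj
    have hj' : Real.log (p k) + (α * L1 k) / (p k : ℝ) ≤ Lhat k := by
      rw [hLhate k]; exact hj
    have h5 := mul_le_mul_of_nonneg_left hj' (le_of_lt hp')
    have h6 : (p k : ℝ) * ((α * L1 k) / (p k : ℝ)) = α * L1 k := by field_simp
    rw [hLs]
    nlinarith [h5, h6]
  -- combine penalty
  have hPdiff : Pstar - Phat = ∑ k : Fin K, (p k : ℝ) * (Lstar k - Lhat k) := by
    rw [hPstardef, hPhatdef, ← Finset.sum_sub_distrib]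
    exact Finset.sum_congr rfl fun k _ => by ring
  set AG : ℝ := ∑ k ∈ G, (p k : ℝ) * L1 k with hAGdef
  set AC : ℝ := ∑ k ∈ Gᶜ, L1 k with hACdef
  set BG : ℝ := ∑ k ∈ G, L1 k with hBGdef
  clear_value AG AC BG
  have hAC0 : 0 ≤ AC := by
    rw [hACdef]; exact Finset.sum_nonneg fun k _ => hL10 k
  have hPd : Pstar - Phat ≤ α * AG - α * AC := by
    rw [hPdiff, ← Finset.sum_add_sum_compl G (fun k => (p k : ℝ) * (Lstar k - Lhat k))]
    have hG1 : ∑ k ∈ G, (p k : ℝ) * (Lstar k - Lhat k) ≤ α * AG := by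
      rw [hAGdef, Finset.mul_sum]
      refine Finset.sum_le_sum fun k _ => ?_
      have h := mul_le_mul_of_nonneg_left (hC1 k) (Nat.cast_nonneg (p k) : (0:ℝ) ≤ p k)
      calc (p k : ℝ) * (Lstar k - Lhat k) ≤ (p k : ℝ) * (α * L1 k) := h
        _ = α * ((p k : ℝ) * L1 k) := by ring
    have hG2 : ∑ k ∈ Gᶜ, (p k : ℝ) * (Lstar k - Lhat k) ≤ -(α * AC) := by
      rw [hACdef, Finset.mul_sum, ← Finset.sum_neg_distrib]
      exact Finset.sum_le_sum fun k hk => hC2 k hk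
    linarith
  -- ℓ1 norm splits
  have hsig : (∑ j : Σ k : Fin K, Fin (p k), |Δ j|) = BG + AC := by
    have h1 : (∑ j : Σ k : Fin K, Fin (p k), |Δ j|) = ∑ k : Fin K, L1 k := by
      rw [show (∑ k : Fin K, L1 k) = ∑ k : Fin K, ∑ j : Fin (p k), |Δ ⟨k, j⟩| from
        Finset.sum_congr rfl fun k _ => hL1e k]
      rw [Finset.sum_sigma' Finset.univ (fun _ => Finset.univ) (fun k j => |Δ ⟨k, j⟩|)]
      rw [Finset.univ_sigma_univ]
    rw [h1, hBGdef, hACdef, Finset.sum_add_sum_compl]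
  -- main bound
  set A' : ℝ := ∑ k ∈ G, (1 + 2 * (p k : ℝ)) * L1 k with hA'def
  clear_value A'
  have hBG2AG : BG + 2 * AG = A' := by
    rw [hA'def, hBGdef, hAGdef, Finset.mul_sum, ← Finset.sum_add_distrib]
    exact Finset.sum_congr rfl fun k _ => by ring
  have hmain : T ≤ (n:ℝ) * (lam * α) * (A' - AC) := by
    have h1 := mul_le_mul_of_nonneg_left hPd (by positivity : (0:ℝ) ≤ 2 * (n:ℝ) * lam)
    rw [hsig] at hE
    have hm : (n:ℝ) * (lam * α) * (BG + 2 * AG) = (n:ℝ) * (lam * α) * A' := by rw [hBG2AG]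
    linarith [key, hE, h1, hm]
  -- cone condition
  have hcone : AC ≤ A' := by
    have hx : 0 ≤ (n:ℝ) * (lam * α) * (A' - AC) := le_trans hT0 hmain
    have hc : (0:ℝ) < (n:ℝ) * (lam * α) := by positivity
    have := (mul_nonneg_iff_of_pos_left hc).mp hx
    linarith
  -- apply RE
  set W : ℝ := ∑ k ∈ G, (p k : ℝ) * (1 + (p k : ℝ)) ^ 2 * S k with hWdef
  clear_value W
  have hW0 : 0 ≤ W := by
    rw [hWdef]
    refine Finset.sum_nonneg fun k _ => ?_
    have := hS0 k
    positivity
  have hREapp : κ * Real.sqrt (n:ℝ) * Real.sqrt W ≤ 2 * Real.sqrt T := by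
    have hcone' : (∑ k ∈ Gᶜ, ∑ j : Fin (p k), |Δ ⟨k, j⟩|) ≤
        (∑ k ∈ G, (1 + 2 * (p k : ℝ)) * ∑ j : Fin (p k), |Δ ⟨k, j⟩|) := by
      have e1 : (∑ k ∈ Gᶜ, ∑ j : Fin (p k), |Δ ⟨k, j⟩|) = AC := by
        rw [hACdef]; exact Finset.sum_congr rfl fun k _ => (hL1e k).symm
      have e2 : (∑ k ∈ G, (1 + 2 * (p k : ℝ)) * ∑ j : Fin (p k), |Δ ⟨k, j⟩|) = A' := by
        rw [hA'def]; exact Finset.sum_congr rfl fun k _ => by rw [hL1e k]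
      rw [e1, e2]; exact hcone
    have h := hRE G (le_of_eq hs.symm) Δ hΔ0 hcone'
    have e3 : (∑ k ∈ G, (p k : ℝ) * (1 + (p k : ℝ)) ^ 2 * ∑ j : Fin (p k), (Δ ⟨k, j⟩) ^ 2) = W := by
      rw [hWdef]; exact Finset.sum_congr rfl fun k _ => by rw [hSe k]
    have e4 : (∑ i : Fin n, (∑ j : Σ k : Fin K, Fin (p k), X i j * Δ j) ^ 2) = T := by
      rw [hTdef]; exact Finset.sum_congr rfl fun i _ => by rw [hve i]
    rw [e3, e4] at h
    exact h
  -- Cauchy-Schwarz bounds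
  have hCS1 : ∀ k, L1 k ≤ Real.sqrt ((p k : ℝ) * S k) := by
    intro k
    have h := Finset.sum_mul_sq_le_sq_mul_sq Finset.univ (fun j : Fin (p k) => |Δ ⟨k, j⟩|)
      (fun _ => (1:ℝ))
    simp only [mul_one, one_pow, Finset.sum_const, Finset.card_univ, Fintype.card_fin,
      nsmul_eq_mul, sq_abs] at h
    have h' : (L1 k) ^ 2 ≤ S k * (p k : ℝ) := by
      rw [hL1e k, hSe k]
      exact_mod_cast h
    have : (0:ℝ) ≤ (p k : ℝ) * S k := by have := hS0 k; positivity
    refine (Real.le_sqrt (hL10 k) this).mpr ?_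
    calc (L1 k) ^ 2 ≤ S k * (p k : ℝ) := h'
      _ = (p k : ℝ) * S k := by ring
  have hterm : ∀ k, (1 + 2 * (p k : ℝ)) * L1 k
      ≤ 2 * Real.sqrt ((p k : ℝ) * (1 + (p k : ℝ)) ^ 2 * S k) := by
    intro k
    have hpk : (0:ℝ) ≤ (p k : ℝ) := Nat.cast_nonneg _
    have e : Real.sqrt ((p k : ℝ) * (1 + (p k : ℝ)) ^ 2 * S k)
        = (1 + (p k : ℝ)) * Real.sqrt ((p k : ℝ) * S k) := by
      rw [show (p k : ℝ) * (1 + (p k : ℝ)) ^ 2 * S k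
          = (1 + (p k : ℝ)) ^ 2 * ((p k : ℝ) * S k) from by ring,
        Real.sqrt_mul (sq_nonneg _), Real.sqrt_sq (by positivity)]
    rw [e]
    have h1 : (1 + 2 * (p k : ℝ)) * L1 k ≤ (1 + 2 * (p k : ℝ)) * Real.sqrt ((p k : ℝ) * S k) :=
      mul_le_mul_of_nonneg_left (hCS1 k) (by positivity)
    have h2 : (1 + 2 * (p k : ℝ)) * Real.sqrt ((p k : ℝ) * S k)
        ≤ (2 * (1 + (p k : ℝ))) * Real.sqrt ((p k : ℝ) * S k) :=
      mul_le_mul_of_nonneg_right (by linarith) (Real.sqrt_nonneg _)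
    calc (1 + 2 * (p k : ℝ)) * L1 k ≤ (2 * (1 + (p k : ℝ))) * Real.sqrt ((p k : ℝ) * S k) :=
          le_trans h1 h2
      _ = 2 * ((1 + (p k : ℝ)) * Real.sqrt ((p k : ℝ) * S k)) := by ring
  have hA'bound : A' ≤ 2 * Real.sqrt ((s : ℝ) * W) := by
    have h1 : A' ≤ ∑ k ∈ G, 2 * Real.sqrt ((p k : ℝ) * (1 + (p k : ℝ)) ^ 2 * S k) := by
      rw [hA'def]
      exact Finset.sum_le_sum fun k _ => hterm k
    have h2 : (∑ k ∈ G, Real.sqrt ((p k : ℝ) * (1 + (p k : ℝ)) ^ 2 * S k))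
        ≤ Real.sqrt ((s : ℝ) * W) := by
      have hcs := Finset.sum_mul_sq_le_sq_mul_sq G
        (fun k => Real.sqrt ((p k : ℝ) * (1 + (p k : ℝ)) ^ 2 * S k)) (fun _ => (1:ℝ))
      simp only [mul_one, one_pow, Finset.sum_const, nsmul_eq_mul] at hcs
      have hsq : ∀ k ∈ G, Real.sqrt ((p k : ℝ) * (1 + (p k : ℝ)) ^ 2 * S k) ^ 2
          = (p k : ℝ) * (1 + (p k : ℝ)) ^ 2 * S k := fun k _ => Real.sq_sqrt (by
            have := hS0 k; positivity)
      rw [Finset.sum_congr rfl hsq] at hcs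
      have hsW : (0:ℝ) ≤ (s:ℝ) * W := mul_nonneg (Nat.cast_nonneg _) hW0
      refine (Real.le_sqrt (Finset.sum_nonneg fun k _ => Real.sqrt_nonneg _) hsW).mpr ?_
      rw [hs]
      calc (∑ k ∈ G, Real.sqrt ((p k : ℝ) * (1 + (p k : ℝ)) ^ 2 * S k)) ^ 2
          ≤ W * (G.card : ℝ) := by rw [hWdef]; exact hcs
        _ = (G.card : ℝ) * W := by ring
    calc A' ≤ ∑ k ∈ G, 2 * Real.sqrt ((p k : ℝ) * (1 + (p k : ℝ)) ^ 2 * S k) := h1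
      _ = 2 * ∑ k ∈ G, Real.sqrt ((p k : ℝ) * (1 + (p k : ℝ)) ^ 2 * S k) := by
          rw [Finset.mul_sum]
      _ ≤ 2 * Real.sqrt ((s : ℝ) * W) := by linarith
  -- put it together
  have hsn : (0:ℝ) < Real.sqrt n := Real.sqrt_pos.mpr hn'
  set t : ℝ := Real.sqrt T with htdef
  have ht0 : 0 ≤ t := Real.sqrt_nonneg _
  have hTt : T = t ^ 2 := (Real.sq_sqrt hT0).symm
  have hWt : Real.sqrt W ≤ 2 * t / (κ * Real.sqrt n) := by
    rw [le_div_iff₀ (by positivity)]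
    calc Real.sqrt W * (κ * Real.sqrt n) = κ * Real.sqrt n * Real.sqrt W := by ring
      _ ≤ 2 * t := hREapp
  set C : ℝ := 4 * lam * α * Real.sqrt (s : ℝ) * Real.sqrt (n : ℝ) / κ with hCdef
  have hC0 : 0 ≤ C := by rw [hCdef]; positivity
  have h7 : t ^ 2 ≤ C * t := by
    have hsqrtmul : Real.sqrt ((s:ℝ) * W) = Real.sqrt (s:ℝ) * Real.sqrt W :=
      Real.sqrt_mul (Nat.cast_nonneg _) _
    have h8 : T ≤ (n:ℝ) * (lam * α) * (2 * (Real.sqrt (s:ℝ) * Real.sqrt W)) := by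
      calc T ≤ (n:ℝ) * (lam * α) * (A' - AC) := hmain
        _ ≤ (n:ℝ) * (lam * α) * A' := by
            have hnl : (0:ℝ) ≤ (n:ℝ) * (lam * α) := by positivity
            have := mul_nonneg hnl hAC0
            linarith
        _ ≤ (n:ℝ) * (lam * α) * (2 * Real.sqrt ((s:ℝ) * W)) :=
            mul_le_mul_of_nonneg_left hA'bound (by positivity)
        _ = (n:ℝ) * (lam * α) * (2 * (Real.sqrt (s:ℝ) * Real.sqrt W)) := by rw [hsqrtmul]
    have h9 : (n:ℝ) * (lam * α) * (2 * (Real.sqrt (s:ℝ) * Real.sqrt W))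
        ≤ (n:ℝ) * (lam * α) * (2 * (Real.sqrt (s:ℝ) * (2 * t / (κ * Real.sqrt n)))) := by
      have hss : (0:ℝ) ≤ Real.sqrt (s:ℝ) := Real.sqrt_nonneg _
      have ha := mul_le_mul_of_nonneg_left hWt hss
      have hb := mul_le_mul_of_nonneg_left ha (by norm_num : (0:ℝ) ≤ 2)
      exact mul_le_mul_of_nonneg_left hb (by positivity)
    have hid : (n:ℝ) * (lam * α) * (2 * (Real.sqrt (s:ℝ) * (2 * t / (κ * Real.sqrt n)))) = C * t := by
      rw [hCdef]
      have hsq : Real.sqrt (n:ℝ) * Real.sqrt (n:ℝ) = (n:ℝ) := Real.mul_self_sqrt (le_of_lt hn')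
      field_simp
      linear_combination (-(4 * Real.sqrt (s:ℝ) * t)) * hsq
    rw [← hTt]
    calc T ≤ (n:ℝ) * (lam * α) * (2 * (Real.sqrt (s:ℝ) * (2 * t / (κ * Real.sqrt n)))) :=
          le_trans h8 h9
      _ = C * t := hid
  have h10 : t ≤ C := by
    rcases eq_or_lt_of_le ht0 with h | h
    · rw [← h]; exact hC0
    · have h7' := h7
      rw [sq] at h7'
      exact le_of_mul_le_mul_right (by linarith [h7']) h
  have hCsq : C ^ 2 = 16 * (s : ℝ) * (lam * α) ^ 2 * (n : ℝ) / κ ^ 2 := by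
    rw [hCdef, div_pow,
      show (4 * lam * α * Real.sqrt (s:ℝ) * Real.sqrt (n:ℝ)) ^ 2
        = 16 * (lam * α) ^ 2 * (Real.sqrt (s:ℝ)) ^ 2 * (Real.sqrt (n:ℝ)) ^ 2 from by ring,
      Real.sq_sqrt (Nat.cast_nonneg s : (0:ℝ) ≤ (s:ℝ)), Real.sq_sqrt (le_of_lt hn')]
    ring
  have hTfin : T ≤ 16 * (s : ℝ) * (lam * α) ^ 2 * (n : ℝ) / κ ^ 2 := by
    rw [hTt, ← hCsq]
    exact pow_le_pow_left₀ ht0 h10 2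
  have hfin := mul_le_mul_of_nonneg_left hTfin (by positivity : (0:ℝ) ≤ 1 / (n:ℝ))
  calc (1 / (n:ℝ)) * T ≤ (1 / (n:ℝ)) * (16 * (s : ℝ) * (lam * α) ^ 2 * (n : ℝ) / κ ^ 2) := hfin
    _ = 16 * (s : ℝ) * (lam * α) ^ 2 / κ ^ 2 := by
        field_simp
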